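/- Let 𝔤 be a Lie algebra over a field k, and k ⊆ k′ a field extension. A Lie subalgebra 𝔧 ⊆ 𝔤 is a Cartan subalgebra (nilpotent and self-normalizing) if and only if 𝔧 ⊗_k k′ is a Cartan subalgebra of 𝔤 ⊗_k k′. -/

import Mathlib

open TensorProduct

section Aux

variable {k k' M : Type*} [Field k] [Field k'] [Algebra k k']
  [AddCommGroup M] [Module k M]

/-- The "coordinate" map `k' ⊗[k] M →ₗ[k] M` induced by a functional `ψ : k' →ₗ[k] k`. -/
noncomputable def auxCoord (ψ : k' →ₗ[k] k) : (k' ⊗[k] M) →ₗ[k] M :=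
  (TensorProduct.lid k M).toLinearMap ∘ₗ LinearMap.rTensor M ψ

@[simp] lemma auxCoord_tmul (ψ : k' →ₗ[k] k) (c : k') (x : M) :
    auxCoord (M := M) ψ (c ⊗ₜ[k] x) = ψ c • x := by
  simp [auxCoord]

lemma auxCoord_smul_mem (p : Submodule k M) (ψ : k' →ₗ[k] k) {x : k' ⊗[k] M}
    (hx : x ∈ p.baseChange k') (c : k') : auxCoord ψ (c • x) ∈ p := by
  rw [Submodule.baseChange_eq_span] at hx
  refine Submodule.span_induction (p := fun y _ => ∀ c : k', auxCoord (M := M) ψ (c • y) ∈ p)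
    ?_ (by simp) ?_ ?_ hx c
  · rintro y ⟨m, hm, rfl⟩ c
    have h1 : (TensorProduct.mk k k' M 1) m = (1:k') ⊗ₜ[k] m := rfl
    have h2 : c • ((1:k') ⊗ₜ[k] m) = c ⊗ₜ[k] m := by
      rw [smul_tmul', smul_eq_mul, mul_one]
    rw [h1, h2, auxCoord_tmul]
    exact p.smul_mem _ hm
  · intro y z _ _ hy hz c
    rw [smul_add, map_add]; exact p.add_mem (hy c) (hz c)
  · intro a y _ hy c
    rw [smul_smul]; exact hy (c * a)

lemma exists_aux_psi : ∃ ψ : k' →ₗ[k] k, ψ 1 = 1 := by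
  obtain ⟨g, hg⟩ := (Algebra.linearMap k k').exists_leftInverse_of_injective
    (LinearMap.ker_eq_bot.mpr (algebraMap k k').injective)
  refine ⟨g, ?_⟩
  have := LinearMap.congr_fun hg 1
  simpa using this

lemma mem_of_one_tmul_mem_baseChange (p : Submodule k M) {x : M}
    (hx : (1:k') ⊗ₜ[k] x ∈ p.baseChange k') : x ∈ p := by
  obtain ⟨ψ, hψ⟩ := (exists_aux_psi (k := k) (k' := k'))
  have := auxCoord_smul_mem p ψ hx 1
  simpa [hψ] using this

lemma eq_bot_of_baseChange_eq_bot (p : Submodule k M)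
    (h : p.baseChange k' = ⊥) : p = ⊥ := by
  rw [eq_bot_iff]
  intro x hx
  refine mem_of_one_tmul_mem_baseChange (k' := k') ⊥ ?_
  rw [Submodule.baseChange_bot, ← h]
  exact Submodule.tmul_mem_baseChange_of_mem _ hx

variable (k k' M) in
/-- The decomposition of `k' ⊗[k] M` into coordinates along a `k`-basis of `k'`. -/
noncomputable def auxE : (k' ⊗[k] M) ≃ₗ[k] (Module.Basis.ofVectorSpaceIndex k k' →₀ M) :=
  letI : DecidableEq ↑(Module.Basis.ofVectorSpaceIndex k k') := Classical.decEq _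
  (TensorProduct.congr (Module.Basis.ofVectorSpace k k').repr (LinearEquiv.refl k M)).trans
    (TensorProduct.finsuppScalarLeft k M _)

lemma auxE_tmul_apply (c : k') (x : M) (i : Module.Basis.ofVectorSpaceIndex k k') :
    auxE k k' M (c ⊗ₜ[k] x) i = (Module.Basis.ofVectorSpace k k').repr c i • x := by
  simp [auxE, TensorProduct.finsuppScalarLeft_apply_tmul_apply]

lemma auxCoord_coord (i : Module.Basis.ofVectorSpaceIndex k k') (x : k' ⊗[k] M) :
    auxCoord ((Module.Basis.ofVectorSpace k k').coord i) x = auxE k k' M x i := by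
  have : auxCoord (M := M) ((Module.Basis.ofVectorSpace k k').coord i) =
      (Finsupp.lapply i) ∘ₗ ((auxE k k' M).toLinearMap) := by
    apply TensorProduct.ext'
    intro c x
    simp [auxE_tmul_apply, Module.Basis.coord_apply]
  exact LinearMap.congr_fun this x

lemma auxE_decomp (x : k' ⊗[k] M) :
    x = ∑ i ∈ (auxE k k' M x).support,
      ((Module.Basis.ofVectorSpace k k') i : k') ⊗ₜ[k] (auxE k k' M x i) := by
  have hsymm : ∀ (i : Module.Basis.ofVectorSpaceIndex k k') (v : M),
      (auxE k k' M).symm (Finsupp.single i v) = ((Module.Basis.ofVectorSpace k k') i : k') ⊗ₜ[k] v := by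
    intro i v
    simp only [auxE, LinearEquiv.trans_symm, LinearEquiv.trans_apply,
      TensorProduct.finsuppScalarLeft_symm_apply_single, TensorProduct.congr_symm_tmul,
      LinearEquiv.refl_symm, LinearEquiv.refl_apply]
    congr 1
  calc x = (auxE k k' M).symm (auxE k k' M x) := ((auxE k k' M).symm_apply_apply x).symm
    _ = _ := by
      conv_lhs => rw [← Finsupp.sum_single (auxE k k' M x)]
      rw [Finsupp.sum, map_sum]
      exact Finset.sum_congr rfl fun i _ => hsymm i _

lemma mem_baseChange_iff_coords (p : Submodule k M) (x : k' ⊗[k] M) :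
    x ∈ p.baseChange k' ↔ ∀ i, auxE k k' M x i ∈ p := by
  constructor
  · intro hx i
    rw [← auxCoord_coord]
    have := auxCoord_smul_mem p ((Module.Basis.ofVectorSpace k k').coord i) hx 1
    simpa using this
  · intro h
    rw [auxE_decomp (k := k) (k' := k') x]
    exact Submodule.sum_mem _ fun i _ => Submodule.tmul_mem_baseChange_of_mem _ (h i)

end Aux

section LieAux

variable {k k' L : Type*} [Field k] [Field k'] [Algebra k k']
  [LieRing L] [LieAlgebra k L]

lemma auxCoord_lie (ψ : k' →ₗ[k] k) (x : k' ⊗[k] L) (j : L) :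
    auxCoord ψ ⁅x, (1:k') ⊗ₜ[k] j⁆ = ⁅auxCoord ψ x, j⁆ := by
  induction x using TensorProduct.induction_on with
  | zero => simp
  | tmul c y =>
    rw [LieAlgebra.ExtendScalars.bracket_tmul]
    simp [smul_lie]
  | add u v hu hv => rw [add_lie, map_add, map_add, hu, hv, add_lie]

variable (k') in
/-- Base change of the inclusion of a Lie subalgebra. -/
noncomputable def auxF (J : LieSubalgebra k L) : (k' ⊗[k] ↥J) →ₗ[k'] (k' ⊗[k] L) :=
  LinearMap.baseChange k' (J.incl : ↥J →ₗ⁅k⁆ L).toLinearMap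

@[simp] lemma auxF_tmul (J : LieSubalgebra k L) (c : k') (x : ↥J) :
    auxF k' J (c ⊗ₜ[k] x) = c ⊗ₜ[k] (x : L) := by
  simp [auxF]

lemma auxF_lie (J : LieSubalgebra k L) (u v : k' ⊗[k] ↥J) :
    auxF k' J ⁅u, v⁆ = ⁅auxF k' J u, auxF k' J v⁆ := by
  induction u using TensorProduct.induction_on with
  | zero =>
    exact ((congrArg (auxF k' J) (zero_lie v)).trans (map_zero (auxF k' J))).trans
      (((congrArg (fun z => ⁅z, auxF k' J v⁆) (map_zero (auxF k' J))).trans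
        (zero_lie (auxF k' J v))).symm)
  | tmul a x =>
    induction v using TensorProduct.induction_on with
    | zero =>
      exact ((congrArg (auxF k' J) (lie_zero (a ⊗ₜ[k] x))).trans (map_zero (auxF k' J))).trans
        (((congrArg (fun z => ⁅auxF k' J (a ⊗ₜ[k] x), z⁆) (map_zero (auxF k' J))).trans
          (lie_zero (auxF k' J (a ⊗ₜ[k] x)))).symm)
    | tmul b y =>
      rw [LieAlgebra.ExtendScalars.bracket_tmul, auxF_tmul, auxF_tmul, auxF_tmul,
        LieAlgebra.ExtendScalars.bracket_tmul, LieSubalgebra.coe_bracket]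
    | add v₁ v₂ h₁ h₂ =>
      calc auxF k' J ⁅a ⊗ₜ[k] x, v₁ + v₂⁆
          = auxF k' J (⁅a ⊗ₜ[k] x, v₁⁆ + ⁅a ⊗ₜ[k] x, v₂⁆) := congrArg (auxF k' J) (lie_add (a ⊗ₜ[k] x) v₁ v₂)
        _ = auxF k' J ⁅a ⊗ₜ[k] x, v₁⁆ + auxF k' J ⁅a ⊗ₜ[k] x, v₂⁆ := map_add (auxF k' J) _ _
        _ = ⁅auxF k' J (a ⊗ₜ[k] x), auxF k' J v₁⁆ + ⁅auxF k' J (a ⊗ₜ[k] x), auxF k' J v₂⁆ := by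
            rw [h₁, h₂]
        _ = ⁅auxF k' J (a ⊗ₜ[k] x), auxF k' J v₁ + auxF k' J v₂⁆ := (lie_add (auxF k' J (a ⊗ₜ[k] x)) (auxF k' J v₁) (auxF k' J v₂)).symm
        _ = ⁅auxF k' J (a ⊗ₜ[k] x), auxF k' J (v₁ + v₂)⁆ := by rw [map_add]
  | add u₁ u₂ h₁ h₂ =>
    calc auxF k' J ⁅u₁ + u₂, v⁆
        = auxF k' J (⁅u₁, v⁆ + ⁅u₂, v⁆) := congrArg (auxF k' J) (add_lie u₁ u₂ v)
      _ = auxF k' J ⁅u₁, v⁆ + auxF k' J ⁅u₂, v⁆ := map_add (auxF k' J) _ _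
      _ = ⁅auxF k' J u₁, auxF k' J v⁆ + ⁅auxF k' J u₂, auxF k' J v⁆ := by rw [h₁, h₂]
      _ = ⁅auxF k' J u₁ + auxF k' J u₂, auxF k' J v⁆ := (add_lie (auxF k' J u₁) (auxF k' J u₂) (auxF k' J v)).symm
      _ = ⁅auxF k' J (u₁ + u₂), auxF k' J v⁆ := by rw [map_add]

lemma auxF_injective (J : LieSubalgebra k L) : Function.Injective (auxF k' J) := by
  have hincl : Function.Injective ((J.incl : ↥J →ₗ⁅k⁆ L).toLinearMap) := by
    intro x y h
    exact Subtype.ext h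
  have := Module.Flat.lTensor_preserves_injective_linearMap (M := k')
    ((J.incl : ↥J →ₗ⁅k⁆ L).toLinearMap) hincl
  rw [auxF]
  intro x y h
  apply this
  rw [← LinearMap.baseChange_eq_ltensor]
  exact h

lemma auxF_mem (J : LieSubalgebra k L) (z : k' ⊗[k] ↥J) :
    auxF k' J z ∈ J.toSubmodule.baseChange k' := by
  induction z using TensorProduct.induction_on with
  | zero => simp
  | tmul c x =>
    rw [auxF_tmul]
    exact Submodule.tmul_mem_baseChange_of_mem _ x.2
  | add u v hu hv => rw [map_add]; exact add_mem hu hv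

lemma auxF_surj (J : LieSubalgebra k L) {y : k' ⊗[k] L}
    (hy : y ∈ J.toSubmodule.baseChange k') : ∃ z, auxF k' J z = y := by
  rw [Submodule.baseChange_eq_span] at hy
  refine Submodule.span_induction (p := fun y _ => ∃ z, auxF k' J z = y)
    ?_ ⟨0, map_zero _⟩ ?_ ?_ hy
  · rintro y ⟨m, hm, rfl⟩
    exact ⟨(1:k') ⊗ₜ[k] (⟨m, hm⟩ : ↥J), by simp⟩
  · rintro y z _ _ ⟨u, rfl⟩ ⟨v, rfl⟩
    exact ⟨u + v, map_add _ _ _⟩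
  · rintro a y _ ⟨u, rfl⟩
    exact ⟨a • u, map_smul _ _ _⟩

end LieAux

/-- A Lie subalgebra `𝔧 ⊆ 𝔤` over a field `k` is a Cartan subalgebra if and
only if its base change `𝔧 ⊗_k k′` is a Cartan subalgebra of `𝔤 ⊗_k k′`, for
any field extension `k ⊆ k′`. -/
theorem stmt_10 {k k' L : Type*} [Field k] [Field k'] [Algebra k k']
    [LieRing L] [LieAlgebra k L] (J : LieSubalgebra k L) :
    ∀ J' : LieSubalgebra k' (k' ⊗[k] L),
      J'.toSubmodule = J.toSubmodule.baseChange k' →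
      (J.IsCartanSubalgebra ↔ J'.IsCartanSubalgebra) := by
  intro J' hJ'
  have memJ' : ∀ z : k' ⊗[k] L, z ∈ J' ↔ z ∈ J.toSubmodule.baseChange k' := by
    intro z
    rw [← LieSubalgebra.mem_toSubmodule, hJ']
  -- The Lie algebra isomorphism `k' ⊗ J ≃ J'`.
  have hmem : ∀ z, auxF k' J z ∈ J' := fun z => (memJ' _).mpr (auxF_mem J z)
  let F0 : (k' ⊗[k] ↥J) →ₗ[k'] ↥J' :=
    { toFun := fun z => ⟨auxF k' J z, hmem z⟩
      map_add' := fun u v => Subtype.ext (map_add _ u v)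
      map_smul' := fun c u => Subtype.ext (map_smul _ c u) }
  let G : (k' ⊗[k] ↥J) →ₗ⁅k'⁆ ↥J' :=
    { F0 with
      map_lie' := by
        intro u v
        exact Subtype.ext (auxF_lie J u v) }
  have hGbij : Function.Bijective G := by
    constructor
    · intro u v h
      exact auxF_injective J (congrArg Subtype.val h)
    · rintro ⟨y, hy⟩
      obtain ⟨z, hz⟩ := auxF_surj J ((memJ' y).mp hy)
      exact ⟨z, Subtype.ext hz⟩
  let E : (k' ⊗[k] ↥J) ≃ₗ⁅k'⁆ ↥J' := LieEquiv.ofBijective G hGbij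
  -- Nilpotency transfers.
  have hnil : LieRing.IsNilpotent ↥J ↔ LieRing.IsNilpotent ↥J' := by
    rw [← E.nilpotent_iff_equiv_nilpotent]
    constructor
    · intro h
      haveI := h
      infer_instance
    · intro h
      obtain ⟨n, hn⟩ := (LieModule.isNilpotent_iff k' _ _).mp h
      rw [LieSubmodule.lowerCentralSeries_tensor_eq_baseChange] at hn
      refine (LieModule.isNilpotent_iff k _ _).mpr ⟨n, ?_⟩
      have hcoe := congrArg
        (fun (N : LieSubmodule k' (k' ⊗[k] ↥J) (k' ⊗[k] ↥J)) => LieSubmodule.toSubmodule N) hn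
      simp only [LieSubmodule.coe_baseChange, LieSubmodule.bot_toSubmodule] at hcoe
      have h2 := eq_bot_of_baseChange_eq_bot _ hcoe
      exact (LieSubmodule.toSubmodule_inj _ _).mp
        (by rw [LieSubmodule.bot_toSubmodule]; exact h2)
  -- Self-normalization transfers.
  have hnorm : J.normalizer = J ↔ J'.normalizer = J' := by
    constructor
    · intro h
      refine le_antisymm ?_ J'.le_normalizer
      intro x hx
      rw [LieSubalgebra.mem_normalizer_iff] at hx
      rw [← LieSubalgebra.mem_toSubmodule] at *
      rw [hJ', mem_baseChange_iff_coords]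
      intro i
      have hxi : auxE k k' L x i ∈ J.normalizer := by
        rw [LieSubalgebra.mem_normalizer_iff]
        intro j hj
        have h1 : (1:k') ⊗ₜ[k] j ∈ J' :=
          (memJ' _).mpr (Submodule.tmul_mem_baseChange_of_mem _ hj)
        have h2 := hx _ h1
        have h3 := (mem_baseChange_iff_coords _ _).mp ((memJ' _).mp h2) i
        rwa [← auxCoord_coord, auxCoord_lie, auxCoord_coord] at h3
      rw [h] at hxi
      exact hxi
    · intro h
      refine le_antisymm ?_ J.le_normalizer
      intro x hx
      rw [LieSubalgebra.mem_normalizer_iff] at hx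
      have key : ((1:k') ⊗ₜ[k] x) ∈ J'.normalizer := by
        rw [LieSubalgebra.mem_normalizer_iff]
        intro z hz
        have hz' := (memJ' z).mp hz
        rw [memJ']
        rw [Submodule.baseChange_eq_span] at hz'
        refine Submodule.span_induction
          (p := fun z _ => ⁅(1:k') ⊗ₜ[k] x, z⁆ ∈ J.toSubmodule.baseChange k')
          ?_ (by simp) ?_ ?_ hz'
        · rintro z ⟨m, hm, rfl⟩
          have heq : ⁅(1:k') ⊗ₜ[k] x, (TensorProduct.mk k k' L 1) m⁆
              = (1:k') ⊗ₜ[k] ⁅x, m⁆ := by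
            show ⁅(1:k') ⊗ₜ[k] x, (1:k') ⊗ₜ[k] m⁆ = _
            rw [LieAlgebra.ExtendScalars.bracket_tmul, mul_one]
          rw [heq]
          exact Submodule.tmul_mem_baseChange_of_mem _ (hx m hm)
        · intro u v _ _ hu hv
          rw [lie_add]; exact add_mem hu hv
        · intro a u _ hu
          rw [lie_smul]; exact Submodule.smul_mem _ _ hu
      rw [h] at key
      exact mem_of_one_tmul_mem_baseChange _ ((memJ' _).mp key)
  constructor
  · intro h
    exact { nilpotent := hnil.mp h.nilpotent
            self_normalizing := hnorm.mp h.self_normalizing }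
  · intro h
    exact { nilpotent := hnil.mpr h.nilpotent
            self_normalizing := hnorm.mpr h.self_normalizing }
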